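/- Set λ1 = (h1+h2−l1−l2−α1−α2−β+2)/2 and λ2 = (h1+h2−l1−l2−α1−α2+β+2)/2. Let λ ∈ {λ1, λ2}, let α ∈ {α1, α2}, and assume n := −λ−α is a non-negative integer. Let V⁴ be the complex vector space of functions on (0,∞) spanned by the monomials x ↦ x^{λ+k} for k = 0, 1, …, n. Then the operator A⁴ preserves V⁴, i.e., A⁴ g ∈ V⁴ for every g ∈ V⁴. -/

import Mathlib

noncomputable def qp (q r : ℝ) : ℂ := ((q ^ r : ℝ) : ℂ)

noncomputable def A4 (q h1 h2 l1 l2 a1 a2 b : ℝ) (t1 t2 : ℂ) (g : ℝ → ℂ) (x : ℝ) : ℂ :=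
  (x : ℂ)⁻¹ * ((x : ℂ) - qp q (h1 + 1/2) * t1) * ((x : ℂ) - qp q (h2 + 1/2) * t2) * g (x / q)
    + qp q (a1 + a2) * (x : ℂ)⁻¹ * ((x : ℂ) - qp q (l1 - 1/2) * t1) * ((x : ℂ) - qp q (l2 - 1/2) * t2) * g (q * x)
    - ((qp q a1 + qp q a2) * (x : ℂ)
        + qp q ((h1 + h2 + l1 + l2 + a1 + a2) / 2) * (qp q (b / 2) + qp q (-b / 2)) * t1 * t2 * (x : ℂ)⁻¹) * g x

noncomputable def mono (r : ℝ) : ℝ → ℂ := fun x : ℝ => ((x ^ r : ℝ) : ℂ)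

lemma qp_add {q : ℝ} (hq : 0 < q) (r s : ℝ) : qp q (r + s) = qp q r * qp q s := by
  unfold qp; rw [Real.rpow_add hq]; push_cast; ring

lemma qp_ne {q : ℝ} (hq : 0 < q) (r : ℝ) : qp q r ≠ 0 := by
  unfold qp
  exact_mod_cast (Real.rpow_pos_of_pos hq r).ne'

lemma qp_neg {q : ℝ} (hq : 0 < q) (r : ℝ) : qp q (-r) = (qp q r)⁻¹ := by
  unfold qp; rw [Real.rpow_neg hq.le]; push_cast; ring

lemma key (q h1 h2 l1 l2 a1 a2 β : ℝ) (hq : 0 < q) (t1 t2 : ℂ) (μ : ℝ)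
    (x : ℝ) (hx : 0 < x) :
    A4 q h1 h2 l1 l2 a1 a2 β t1 t2 (mono μ) x =
      (qp q (-μ) + qp q (a1 + a2 + μ) - qp q a1 - qp q a2) * mono (μ + 1) x
      + (-(qp q (-μ)) * (qp q (h1 + 1/2) * t1 + qp q (h2 + 1/2) * t2)
          - qp q (a1 + a2 + μ) * (qp q (l1 - 1/2) * t1 + qp q (l2 - 1/2) * t2)) * mono μ x
      + (qp q (-μ + (h1 + h2 + 1)) * t1 * t2 + qp q (a1 + a2 + μ + (l1 + l2 - 1)) * t1 * t2
          - qp q ((h1 + h2 + l1 + l2 + a1 + a2) / 2) * (qp q (β / 2) + qp q (-β / 2)) * t1 * t2)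
        * mono (μ - 1) x := by
  have hx' : (x : ℂ) ≠ 0 := by exact_mod_cast hx.ne'
  have hQm : qp q μ ≠ 0 := qp_ne hq μ
  have d1 : qp q (-μ) = (qp q μ)⁻¹ := qp_neg hq μ
  have qpA : qp q (a1 + a2) = qp q a1 * qp q a2 := qp_add hq _ _
  have d2 : qp q (a1 + a2 + μ) = qp q a1 * qp q a2 * qp q μ := by
    rw [qp_add hq, qpA]
  have d3 : qp q (-μ + (h1 + h2 + 1)) = (qp q μ)⁻¹ * (qp q (h1 + 1/2) * qp q (h2 + 1/2)) := by
    rw [show -μ + (h1 + h2 + 1) = (-μ) + ((h1 + 1/2) + (h2 + 1/2)) from by ring,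
      qp_add hq, qp_add hq, qp_neg hq]
  have d4 : qp q (a1 + a2 + μ + (l1 + l2 - 1))
      = qp q a1 * qp q a2 * qp q μ * (qp q (l1 - 1/2) * qp q (l2 - 1/2)) := by
    rw [show a1 + a2 + μ + (l1 + l2 - 1) = a1 + (a2 + (μ + ((l1 - 1/2) + (l2 - 1/2)))) from by ring,
      qp_add hq, qp_add hq, qp_add hq, qp_add hq]; ring
  have hdiv : ((x / q) ^ μ : ℝ) = x ^ μ * (q ^ μ)⁻¹ := by
    rw [Real.div_rpow hx.le hq.le, div_eq_mul_inv]
  have hmul : ((q * x) ^ μ : ℝ) = q ^ μ * x ^ μ := Real.mul_rpow hq.le hx.le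
  have hp1 : (x ^ (μ + 1) : ℝ) = x ^ μ * x := Real.rpow_add_one hx.ne' μ
  have hm1 : (x ^ (μ - 1) : ℝ) = x ^ μ / x := Real.rpow_sub_one hx.ne' μ
  unfold A4 mono
  rw [d1, d2, d3, d4, qpA, hdiv, hmul, hp1, hm1]
  push_cast
  have hqm : ((q ^ μ : ℝ) : ℂ) = qp q μ := rfl
  rw [hqm]
  field_simp
  ring

lemma cP_zero {q a1 a2 α μ : ℝ} (hq : 0 < q) (hα : α = a1 ∨ α = a2) (hμ : μ = -α) :
    qp q (-μ) + qp q (a1 + a2 + μ) - qp q a1 - qp q a2 = 0 := by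
  rcases hα with h | h
  · rw [show -μ = a1 from by rw [hμ, h]; ring, show a1 + a2 + μ = a2 from by rw [hμ, h]; ring]
    ring
  · rw [show -μ = a2 from by rw [hμ, h]; ring, show a1 + a2 + μ = a1 from by rw [hμ, h]; ring]
    ring

lemma cM_zero {q h1 h2 l1 l2 a1 a2 β μ : ℝ} (hq : 0 < q) (t1 t2 : ℂ)
    (hlam : μ = (h1 + h2 - l1 - l2 - a1 - a2 - β + 2) / 2 ∨
      μ = (h1 + h2 - l1 - l2 - a1 - a2 + β + 2) / 2) :
    qp q (-μ + (h1 + h2 + 1)) * t1 * t2 + qp q (a1 + a2 + μ + (l1 + l2 - 1)) * t1 * t2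
      - qp q ((h1 + h2 + l1 + l2 + a1 + a2) / 2) * (qp q (β / 2) + qp q (-β / 2)) * t1 * t2 = 0 := by
  rcases hlam with rfl | rfl
  · rw [show -((h1 + h2 - l1 - l2 - a1 - a2 - β + 2) / 2) + (h1 + h2 + 1)
        = (h1 + h2 + l1 + l2 + a1 + a2) / 2 + β / 2 from by ring,
      show a1 + a2 + (h1 + h2 - l1 - l2 - a1 - a2 - β + 2) / 2 + (l1 + l2 - 1)
        = (h1 + h2 + l1 + l2 + a1 + a2) / 2 + -β / 2 from by ring,
      qp_add hq, qp_add hq]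
    ring
  · rw [show -((h1 + h2 - l1 - l2 - a1 - a2 + β + 2) / 2) + (h1 + h2 + 1)
        = (h1 + h2 + l1 + l2 + a1 + a2) / 2 + -β / 2 from by ring,
      show a1 + a2 + (h1 + h2 - l1 - l2 - a1 - a2 + β + 2) / 2 + (l1 + l2 - 1)
        = (h1 + h2 + l1 + l2 + a1 + a2) / 2 + β / 2 from by ring,
      qp_add hq, qp_add hq]
    ring

theorem stmt11 (q h1 h2 l1 l2 a1 a2 β : ℝ) (hq : 0 < q) (hq1 : q ≠ 1)
    (t1 t2 : ℂ) (ht1 : t1 ≠ 0) (ht2 : t2 ≠ 0)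
    (lam α : ℝ)
    (hlam : lam = (h1 + h2 - l1 - l2 - a1 - a2 - β + 2) / 2 ∨
      lam = (h1 + h2 - l1 - l2 - a1 - a2 + β + 2) / 2)
    (hα : α = a1 ∨ α = a2)
    (n : ℕ) (hn : (n : ℝ) = -lam - α)
    (V : Submodule ℂ (ℝ → ℂ))
    (hV : V = Submodule.span ℂ
      {f : ℝ → ℂ | ∃ k : ℕ, k ≤ n ∧ f = fun x : ℝ => ((x ^ (lam + (k : ℝ)) : ℝ) : ℂ)})
    (g : ℝ → ℂ) (hg : g ∈ V) :
    ∃ f ∈ V, ∀ x : ℝ, 0 < x → A4 q h1 h2 l1 l2 a1 a2 β t1 t2 g x = f x := by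
  subst hV
  have hmono : ∀ j : ℕ, j ≤ n → mono (lam + (j : ℝ)) ∈ Submodule.span ℂ
      {f : ℝ → ℂ | ∃ k : ℕ, k ≤ n ∧ f = fun x : ℝ => ((x ^ (lam + (k : ℝ)) : ℝ) : ℂ)} :=
    fun j hj => Submodule.subset_span ⟨j, hj, rfl⟩
  induction hg using Submodule.span_induction with
  | mem g hgS =>
    obtain ⟨k, hk, rfl⟩ := hgS
    set μ := lam + (k : ℝ) with hμ
    set cP := qp q (-μ) + qp q (a1 + a2 + μ) - qp q a1 - qp q a2 with hcP
    set c0 := -(qp q (-μ)) * (qp q (h1 + 1/2) * t1 + qp q (h2 + 1/2) * t2)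
        - qp q (a1 + a2 + μ) * (qp q (l1 - 1/2) * t1 + qp q (l2 - 1/2) * t2) with hc0
    set cM := qp q (-μ + (h1 + h2 + 1)) * t1 * t2 + qp q (a1 + a2 + μ + (l1 + l2 - 1)) * t1 * t2
        - qp q ((h1 + h2 + l1 + l2 + a1 + a2) / 2) * (qp q (β / 2) + qp q (-β / 2)) * t1 * t2
      with hcM
    refine ⟨cP • mono (μ + 1) + c0 • mono μ + cM • mono (μ - 1), ?_, ?_⟩
    · refine Submodule.add_mem _ (Submodule.add_mem _ ?_ ?_) ?_
      · rcases eq_or_lt_of_le hk with hkn | hkn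
        · have : cP = 0 := cP_zero hq hα (by rw [hμ, hkn, hn]; ring)
          rw [this, zero_smul]; exact Submodule.zero_mem _
        · have : mono (μ + 1) = mono (lam + ((k + 1 : ℕ) : ℝ)) := by
            rw [hμ]; push_cast; ring_nf
          rw [this]; exact Submodule.smul_mem _ _ (hmono (k + 1) hkn)
      · exact Submodule.smul_mem _ _ (hmono k hk)
      · rcases Nat.eq_zero_or_pos k with hk0 | hk0
        · have : cM = 0 := cM_zero hq t1 t2 (by rw [hμ, hk0]; push_cast; simpa using hlam)
          rw [this, zero_smul]; exact Submodule.zero_mem _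
        · have : mono (μ - 1) = mono (lam + ((k - 1 : ℕ) : ℝ)) := by
            rw [hμ, Nat.cast_sub hk0]; push_cast; ring_nf
          rw [this]; exact Submodule.smul_mem _ _ (hmono (k - 1) (le_trans (Nat.sub_le k 1) hk))
    · intro x hx
      have := key q h1 h2 l1 l2 a1 a2 β hq t1 t2 μ x hx
      change A4 q h1 h2 l1 l2 a1 a2 β t1 t2 (mono μ) x = _
      simpa [mono, Pi.add_apply, Pi.smul_apply, smul_eq_mul, hcP, hc0, hcM] using this
  | zero =>
    exact ⟨0, Submodule.zero_mem _, fun x hx => by simp [A4]⟩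
  | add g1 g2 _ _ ih1 ih2 =>
    obtain ⟨f1, hf1, he1⟩ := ih1
    obtain ⟨f2, hf2, he2⟩ := ih2
    refine ⟨f1 + f2, Submodule.add_mem _ hf1 hf2, fun x hx => ?_⟩
    simp only [Pi.add_apply, ← he1 x hx, ← he2 x hx, A4]
    ring
  | smul c g1 _ ih =>
    obtain ⟨f1, hf1, he1⟩ := ih
    refine ⟨c • f1, Submodule.smul_mem _ c hf1, fun x hx => ?_⟩
    simp only [Pi.smul_apply, smul_eq_mul, ← he1 x hx, A4]
    ring
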